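/- If 𝒯 is an E-closed family with least generating set 𝒯', then the map sending a subset A ⊆ 𝒯' to Cl_E(A) is an order-isomorphism between the Boolean algebra of all subsets of 𝒯' and the family ℬ(𝒯) of E-closed subsets of 𝒯 generated by subsets of 𝒯', ordered by inclusion; in particular ℬ(𝒯) is a Boolean algebra isomorphic to the powerset algebra of 𝒯'. -/

import Mathlib

open Set

variable {σ : Type*}

/-- For a family 𝒯 of theories (sets of sentences) and a sentence φ,
`Tphi 𝒯 φ` is the set 𝒯_φ = {T ∈ 𝒯 | φ ∈ T}. -/
def Tphi (𝒯 : Set (Set σ)) (φ : σ) : Set (Set σ) := {T ∈ 𝒯 | φ ∈ T}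

/-- E-closure relative to the ambient set `S` of all complete theories:
`ClE S 𝒯 = 𝒯 ∪ {T ∈ S | ∀ φ ∈ T, 𝒯_φ is infinite}`. -/
def ClE (S 𝒯 : Set (Set σ)) : Set (Set σ) :=
  𝒯 ∪ {T ∈ S | ∀ φ ∈ T, (Tphi 𝒯 φ).Infinite}

/-- 𝒯 is E-closed if it equals its own E-closure. -/
def EClosed (S 𝒯 : Set (Set σ)) : Prop := ClE S 𝒯 = 𝒯

/-- `𝒯'` is a generating set for `𝒯`. -/
def Generates (S 𝒯' 𝒯 : Set (Set σ)) : Prop := 𝒯' ⊆ 𝒯 ∧ ClE S 𝒯' = 𝒯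

/-- `𝒯'` is the least generating set for `𝒯`. -/
def IsLeastGen (S 𝒯' 𝒯 : Set (Set σ)) : Prop :=
  Generates S 𝒯' 𝒯 ∧ ∀ 𝒯'', Generates S 𝒯'' 𝒯 → 𝒯' ⊆ 𝒯''

/-- `T` is an isolated point of `𝒯`: some sentence φ ∈ T has 𝒯_φ = {T}. -/
def IsolatedIn (𝒯 : Set (Set σ)) (T : Set σ) : Prop := ∃ φ ∈ T, Tphi 𝒯 φ = {T}

/-- The meet operation ∧′: E-closure of the set of isolated points of 𝒯₁ ∩ 𝒯₂. -/
def meetI (S 𝒯₁ 𝒯₂ : Set (Set σ)) : Set (Set σ) :=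
  ClE S {T ∈ 𝒯₁ ∩ 𝒯₂ | IsolatedIn (𝒯₁ ∩ 𝒯₂) T}

lemma subset_clE (S A : Set (Set σ)) : A ⊆ ClE S A := subset_union_left

lemma tphi_mono {A B : Set (Set σ)} (h : A ⊆ B) (φ : σ) : Tphi A φ ⊆ Tphi B φ :=
  fun T hT => ⟨h hT.1, hT.2⟩

lemma clE_mono (S : Set (Set σ)) {A B : Set (Set σ)} (h : A ⊆ B) : ClE S A ⊆ ClE S B := by
  rintro T (hT | ⟨hTS, hinf⟩)
  · exact Or.inl (h hT)
  · exact Or.inr ⟨hTS, fun φ hφ => (hinf φ hφ).mono (tphi_mono h φ)⟩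

lemma clE_idem (S A : Set (Set σ)) : ClE S (ClE S A) = ClE S A := by
  refine subset_antisymm ?_ (subset_clE S (ClE S A))
  rintro T (hT | ⟨hTS, hinf⟩)
  · exact hT
  · refine Or.inr ⟨hTS, fun φ hφ => ?_⟩
    have h := hinf φ hφ
    by_cases hx : ∃ U ∈ S, φ ∈ U ∧ ∀ ψ ∈ U, (Tphi A ψ).Infinite
    · obtain ⟨U, _, hφU, hU⟩ := hx
      exact hU φ hφU
    · have hsub : Tphi (ClE S A) φ ⊆ Tphi A φ := by
        rintro U ⟨(hU | ⟨hUS, hUinf⟩), hφU⟩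
        · exact ⟨hU, hφU⟩
        · exact absurd ⟨U, hUS, hφU, hUinf⟩ hx
      exact h.mono hsub

lemma least_gen_isolated (S 𝒯 𝒯' : Set (Set σ)) (h𝒯S : 𝒯 ⊆ S)
    (hg : IsLeastGen S 𝒯' 𝒯) : ∀ T ∈ 𝒯', ∃ φ ∈ T, (Tphi 𝒯' φ).Finite := by
  intro T hT
  by_contra h
  push_neg at h
  have key : ∀ V : Set σ, (∀ φ ∈ V, (Tphi 𝒯' φ).Infinite) →
      ∀ φ ∈ V, (Tphi (𝒯' \ {T}) φ).Infinite := by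
    intro V hV φ hφ
    have hsub : Tphi 𝒯' φ \ {T} ⊆ Tphi (𝒯' \ {T}) φ := by
      rintro W ⟨⟨hW1, hW2⟩, hW3⟩; exact ⟨⟨hW1, hW3⟩, hW2⟩
    exact ((hV φ hφ).diff (finite_singleton T)).mono hsub
  have hgen : Generates S (𝒯' \ {T}) 𝒯 := by
    constructor
    · exact diff_subset.trans hg.1.1
    · refine subset_antisymm ?_ ?_
      · rw [← hg.1.2]; exact clE_mono S diff_subset
      · intro U hU
        have hU' : U ∈ ClE S 𝒯' := hg.1.2 ▸ hU
        rcases hU' with hU' | ⟨hUS, hUinf⟩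
        · by_cases hUT : U = T
          · subst hUT
            exact Or.inr ⟨h𝒯S (hg.1.1 hT), key U (fun φ hφ => h φ hφ)⟩
          · exact Or.inl ⟨hU', hUT⟩
        · exact Or.inr ⟨hUS, key U hUinf⟩
  exact (hg.2 _ hgen hT).2 rfl

lemma le_of_clE_le {S 𝒯 𝒯' : Set (Set σ)}
    (hiso : ∀ T ∈ 𝒯', ∃ φ ∈ T, (Tphi 𝒯' φ).Finite)
    {A B : Set (Set σ)} (hA : A ⊆ 𝒯') (hB : B ⊆ 𝒯')
    (h : ClE S A ⊆ ClE S B) : A ⊆ B := by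
  intro T hT
  rcases h (subset_clE S A hT) with hT' | ⟨hTS, hinf⟩
  · exact hT'
  · obtain ⟨φ, hφ, hfin⟩ := hiso T (hA hT)
    exact absurd (hinf φ hφ) fun hi => hi (hfin.subset (tphi_mono hB φ))

/-- Remark 2.9: for an E-closed 𝒯 with least generating set 𝒯', the map A ↦ Cl_E(A) is an
order-isomorphism from the powerset Boolean algebra of 𝒯' onto the family
ℬ(𝒯) = {Cl_E(A) | A ⊆ 𝒯'} of E-closed subsets of 𝒯, ordered by inclusion. -/
theorem boolean_algebra_iso {σ : Type*} (S 𝒯 𝒯' : Set (Set σ))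
    (hS : ∀ T ∈ S, T.Nonempty) (h𝒯S : 𝒯 ⊆ S)
    (hcl : EClosed S 𝒯) (hg : IsLeastGen S 𝒯' 𝒯) :
    (∀ A, A ⊆ 𝒯' → EClosed S (ClE S A) ∧ ClE S A ⊆ 𝒯) ∧
    ∃ e : Set ↥𝒯' ≃o ↥{B : Set (Set σ) | ∃ A, A ⊆ 𝒯' ∧ B = ClE S A},
      ∀ A : Set ↥𝒯', ((e A : Set (Set σ)) = ClE S ((↑) '' A)) := by
  have hiso := least_gen_isolated S 𝒯 𝒯' h𝒯S hg
  refine ⟨fun A hA => ⟨clE_idem S A, by rw [← hg.1.2]; exact clE_mono S hA⟩, ?_⟩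
  set ℬ : Set (Set (Set σ)) := {B : Set (Set σ) | ∃ A, A ⊆ 𝒯' ∧ B = ClE S A} with hℬ
  have himg : ∀ A : Set ↥𝒯', ((↑) '' A : Set (Set σ)) ⊆ 𝒯' := by
    rintro A _ ⟨x, _, rfl⟩; exact x.2
  let f : Set ↥𝒯' → ↥ℬ := fun A => ⟨ClE S ((↑) '' A), (↑) '' A, himg A, rfl⟩
  have hle : ∀ A B : Set ↥𝒯', f A ≤ f B ↔ A ≤ B := by
    intro A B
    constructor
    · intro h x hx
      have h' : ((↑) '' A : Set (Set σ)) ⊆ (↑) '' B :=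
        le_of_clE_le (𝒯 := 𝒯) hiso (himg A) (himg B) h
      obtain ⟨y, hy, hyx⟩ := h' ⟨x, hx, rfl⟩
      exact Subtype.ext hyx ▸ hy
    · intro h
      exact clE_mono S (image_mono h)
  have hbij : Function.Bijective f := by
    constructor
    · intro A B hAB
      exact le_antisymm ((hle A B).1 hAB.le) ((hle B A).1 hAB.ge)
    · rintro ⟨B, A0, hA0, rfl⟩
      refine ⟨(↑) ⁻¹' A0, ?_⟩
      have : ((↑) '' ((↑) ⁻¹' A0 : Set ↥𝒯') : Set (Set σ)) = A0 := by
        rw [Subtype.image_preimage_coe, inter_eq_right.mpr hA0]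
      exact Subtype.ext (by simp only [f, this])
  refine ⟨{ toEquiv := Equiv.ofBijective f hbij, map_rel_iff' := by intro A B; exact hle A B },
    fun A => rfl⟩
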